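/- Let 1 < q < ∞ and 0 < s < 1, and let w be a non-negative measurable function on (0,∞). Define J₁(r) = (1/r) ∫_0^{r/2} w(λ) (∫_{r−λ}^{r+λ} ρ^{−1+s} h(ρ,λ;r)^{−1/2} dρ) dλ and J₃(r) = (1/r) ∫_{2r}^{∞} w(λ) (∫_{λ−r}^{λ+r} ρ^{−1+s} h(ρ,λ;r)^{−1/2} dρ) dλ. Then there is a constant C such that for i = 1 and i = 3, r^{1/q} J_i(r) ≤ C ∫_0^∞ λ^{1/q} w(λ) |r − λ|^{−(1−s)} dλ for all r > 0. -/

import Mathlib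

open MeasureTheory Set
open scoped ENNReal NNReal

/-- `h(ρ,λ;r) = 1 - ((r² + λ² - ρ²)/(2λr))²`. -/
noncomputable def hKernel (ρ lam r : ℝ) : ℝ :=
  1 - ((r ^ 2 + lam ^ 2 - ρ ^ 2) / (2 * lam * r)) ^ 2

/-- `J₁(r) = (1/r) ∫₀^{r/2} w(λ) ∫_{r-λ}^{r+λ} ρ^{-1+s} h(ρ,λ;r)^{-1/2} dρ dλ`. -/
noncomputable def J₁ (s : ℝ) (w : ℝ → ℝ) (r : ℝ) : ℝ≥0∞ :=
  ENNReal.ofReal (1 / r) *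
    ∫⁻ lam in Ioo (0 : ℝ) (r / 2), ENNReal.ofReal (w lam) *
      ∫⁻ ρ in Ioo (r - lam) (r + lam),
        ENNReal.ofReal (ρ ^ (-1 + s) * hKernel ρ lam r ^ (-(1 / 2) : ℝ))

/-- `J₃(r) = (1/r) ∫_{2r}^∞ w(λ) ∫_{λ-r}^{λ+r} ρ^{-1+s} h(ρ,λ;r)^{-1/2} dρ dλ`. -/
noncomputable def J₃ (s : ℝ) (w : ℝ → ℝ) (r : ℝ) : ℝ≥0∞ :=
  ENNReal.ofReal (1 / r) *
    ∫⁻ lam in Ioi (2 * r), ENNReal.ofReal (w lam) *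
      ∫⁻ ρ in Ioo (lam - r) (lam + r),
        ENNReal.ofReal (ρ ^ (-1 + s) * hKernel ρ lam r ^ (-(1 / 2) : ℝ))

lemma lint_left (a b : ℝ) (hab : a < b) :
    ∫⁻ x in Ioo a b, ENNReal.ofReal ((x - a) ^ (-(1/2) : ℝ)) = ENNReal.ofReal (2 * Real.sqrt (b - a)) := by
  have h2 : (-1 : ℝ) < -(1/2) := by norm_num
  have hint : IntervalIntegrable (fun x => (x - a) ^ (-(1/2) : ℝ)) volume a b := by
    simpa using (intervalIntegral.intervalIntegrable_rpow' (a := 0) (b := b - a) h2).comp_sub_right a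
  have hIoo : IntegrableOn (fun x => (x - a) ^ (-(1/2) : ℝ)) (Ioo a b) volume :=
    (intervalIntegrable_iff_integrableOn_Ioo_of_le hab.le).mp hint
  rw [← MeasureTheory.ofReal_integral_eq_lintegral_ofReal hIoo ?_]
  · congr 1
    have : ∫ x in Ioo a b, (x - a) ^ (-(1/2) : ℝ) = ∫ x in a..b, (x - a) ^ (-(1/2) : ℝ) := by
      rw [intervalIntegral.integral_of_le hab.le, MeasureTheory.integral_Ioc_eq_integral_Ioo]
    rw [this, intervalIntegral.integral_comp_sub_right (fun x => x ^ (-(1/2) : ℝ)) a,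
      integral_rpow (Or.inl h2)]
    norm_num
    rw [Real.sqrt_eq_rpow]
    ring
  · filter_upwards [ae_restrict_mem measurableSet_Ioo] with x hx
    exact Real.rpow_nonneg (by linarith [hx.1]) _

lemma lint_right (a b : ℝ) (hab : a < b) :
    ∫⁻ x in Ioo a b, ENNReal.ofReal ((b - x) ^ (-(1/2) : ℝ)) = ENNReal.ofReal (2 * Real.sqrt (b - a)) := by
  have h2 : (-1 : ℝ) < -(1/2) := by norm_num
  have hint : IntervalIntegrable (fun x => (b - x) ^ (-(1/2) : ℝ)) volume a b := by
    simpa using (intervalIntegral.intervalIntegrable_rpow' (a := b - a) (b := 0) h2).comp_sub_left b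
  have hIoo : IntegrableOn (fun x => (b - x) ^ (-(1/2) : ℝ)) (Ioo a b) volume :=
    (intervalIntegrable_iff_integrableOn_Ioo_of_le hab.le).mp hint
  rw [← MeasureTheory.ofReal_integral_eq_lintegral_ofReal hIoo ?_]
  · congr 1
    have : ∫ x in Ioo a b, (b - x) ^ (-(1/2) : ℝ) = ∫ x in a..b, (b - x) ^ (-(1/2) : ℝ) := by
      rw [intervalIntegral.integral_of_le hab.le, MeasureTheory.integral_Ioc_eq_integral_Ioo]
    rw [this, intervalIntegral.integral_comp_sub_left (fun x => x ^ (-(1/2) : ℝ)) b,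
      integral_rpow (Or.inl h2)]
    norm_num
    rw [Real.sqrt_eq_rpow]
    ring
  · filter_upwards [ae_restrict_mem measurableSet_Ioo] with x hx
    exact Real.rpow_nonneg (by linarith [hx.2]) _

lemma lint_g (a b : ℝ) (hab : a < b) :
    ∫⁻ x in Ioo a b, ENNReal.ofReal (((x - a) * (b - x)) ^ (-(1/2) : ℝ)) ≤ 8 := by
  set t := b - a with ht
  have htpos : 0 < t := by simp [ht, hab]
  set c : ℝ := (t/2) ^ (-(1/2) : ℝ) with hc
  have hcpos : 0 < c := Real.rpow_pos_of_pos (by linarith) _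
  have key : ∀ x ∈ Ioo a b,
      ENNReal.ofReal (((x - a) * (b - x)) ^ (-(1/2) : ℝ)) ≤
        ENNReal.ofReal c *
          (ENNReal.ofReal ((x - a) ^ (-(1/2) : ℝ)) + ENNReal.ofReal ((b - x) ^ (-(1/2) : ℝ))) := by
    intro x hx
    have hu : 0 < x - a := by linarith [hx.1]
    have hv : 0 < b - x := by linarith [hx.2]
    rw [← ENNReal.ofReal_add (Real.rpow_nonneg hu.le _) (Real.rpow_nonneg hv.le _),
      ← ENNReal.ofReal_mul hcpos.le]
    apply ENNReal.ofReal_le_ofReal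
    rw [Real.mul_rpow hu.le hv.le]
    rcases le_total x ((a+b)/2) with h | h
    · have hv2 : t/2 ≤ b - x := by rw [ht]; linarith
      have : (b - x) ^ (-(1/2) : ℝ) ≤ c :=
        Real.rpow_le_rpow_of_nonpos (by linarith) hv2 (by norm_num)
      nlinarith [Real.rpow_nonneg hu.le (-(1/2) : ℝ), Real.rpow_nonneg hv.le (-(1/2) : ℝ),
        mul_le_mul_of_nonneg_left this (Real.rpow_nonneg hu.le (-(1/2) : ℝ))]
    · have hu2 : t/2 ≤ x - a := by rw [ht]; linarith
      have : (x - a) ^ (-(1/2) : ℝ) ≤ c :=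
        Real.rpow_le_rpow_of_nonpos (by linarith) hu2 (by norm_num)
      nlinarith [Real.rpow_nonneg hu.le (-(1/2) : ℝ), Real.rpow_nonneg hv.le (-(1/2) : ℝ),
        mul_le_mul_of_nonneg_right this (Real.rpow_nonneg hv.le (-(1/2) : ℝ))]
  calc ∫⁻ x in Ioo a b, ENNReal.ofReal (((x - a) * (b - x)) ^ (-(1/2) : ℝ))
      ≤ ∫⁻ x in Ioo a b, ENNReal.ofReal c *
          (ENNReal.ofReal ((x - a) ^ (-(1/2) : ℝ)) + ENNReal.ofReal ((b - x) ^ (-(1/2) : ℝ))) :=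
        setLIntegral_mono' measurableSet_Ioo key
    _ = ENNReal.ofReal c *
          ((∫⁻ x in Ioo a b, ENNReal.ofReal ((x - a) ^ (-(1/2) : ℝ))) +
            ∫⁻ x in Ioo a b, ENNReal.ofReal ((b - x) ^ (-(1/2) : ℝ))) := by
        rw [lintegral_const_mul' _ _ ENNReal.ofReal_ne_top, lintegral_add_left]
        exact Measurable.ennreal_ofReal (by fun_prop)
    _ = ENNReal.ofReal c * ENNReal.ofReal (4 * Real.sqrt t) := by
        rw [lint_left a b hab, lint_right a b hab, ← ENNReal.ofReal_add (by positivity) (by positivity)]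
        norm_num; ring_nf
        rw [← ht, ENNReal.ofReal_mul (Real.sqrt_nonneg _), ENNReal.ofReal_ofNat]; ring
    _ ≤ 8 := by
        rw [← ENNReal.ofReal_mul hcpos.le]
        have hs : Real.sqrt (t/2) ≠ 0 := by positivity
        have hmul : Real.sqrt (t/2) * Real.sqrt 2 = Real.sqrt t := by
          rw [← Real.sqrt_mul (by linarith) 2]
          norm_num
        have hceq : c = (Real.sqrt (t/2))⁻¹ := by
          rw [hc, Real.rpow_neg (by linarith), ← Real.sqrt_eq_rpow]
        have hval : c * (4 * Real.sqrt t) = 4 * Real.sqrt 2 := by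
          rw [hceq, ← hmul]; field_simp
        rw [hval]
        have h2 : 4 * Real.sqrt 2 ≤ 8 := by
          nlinarith [Real.sq_sqrt (by norm_num : (0:ℝ) ≤ 2), Real.sqrt_nonneg 2]
        exact (ENNReal.ofReal_le_ofReal h2).trans_eq (by norm_num)

lemma inner_bound (s lam r : ℝ) (hs1 : s < 1) (hlam : 0 < lam) (hr : 0 < r) (hne : lam ≠ r) :
    ∫⁻ ρ in Ioo |r - lam| (r + lam),
        ENNReal.ofReal (ρ ^ (-1 + s) * hKernel ρ lam r ^ (-(1 / 2) : ℝ))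
      ≤ ENNReal.ofReal (16 * lam * r * (|r - lam| ^ (-1 + s) * |r - lam|⁻¹)) := by
  set a := |r - lam| with ha_def
  set b := r + lam with hb_def
  have ha : 0 < a := abs_pos.mpr (sub_ne_zero.mpr (Ne.symm hne))
  have hab : a < b := by
    rw [ha_def, hb_def, abs_lt]; constructor <;> linarith
  have hd : (0:ℝ) < 2 * lam * r := by positivity
  set K : ℝ := 2 * lam * r * (a ^ (-1 + s) * a⁻¹) with hK_def
  have hK : 0 ≤ K := by positivity
  have key : ∀ ρ ∈ Ioo a b,
      ρ ^ (-1 + s) * hKernel ρ lam r ^ (-(1 / 2) : ℝ)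
        ≤ K * (((ρ - a) * (b - ρ)) ^ (-(1/2) : ℝ)) := by
    intro ρ hρ'
    obtain ⟨hρa, hρb⟩ := hρ'
    have hρ : 0 < ρ := ha.trans hρa
    have hN1 : 0 < (ρ - a) * (b - ρ) := by nlinarith
    have hN2 : 0 < (ρ + a) * (b + ρ) := by nlinarith
    have hnum : ∀ a' b' : ℝ, a' ^ 2 = (r - lam) ^ 2 → b' = r + lam →
        (2 * lam * r) ^ 2 - (r ^ 2 + lam ^ 2 - ρ ^ 2) ^ 2
          = ((ρ - a') * (b' - ρ)) * ((ρ + a') * (b' + ρ)) := by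
      intro a' b' h1 h2; subst h2; linear_combination ((r + lam) ^ 2 - ρ ^ 2) * h1
    have h1 : hKernel ρ lam r = ((ρ - a) * (b - ρ)) * ((ρ + a) * (b + ρ)) / (2 * lam * r) ^ 2 := by
      rw [← hnum a b (sq_abs _) hb_def]
      unfold hKernel
      field_simp
    have hsq : ∀ x : ℝ, 0 < x → ((x ^ 2 : ℝ)) ^ (-(1/2) : ℝ) = x⁻¹ := by
      intro x hx
      rw [← Real.rpow_natCast x 2, ← Real.rpow_mul hx.le]
      norm_num [Real.rpow_neg_one]
    have hpow : hKernel ρ lam r ^ (-(1 / 2) : ℝ)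
        = ((ρ - a) * (b - ρ)) ^ (-(1/2) : ℝ) * ((ρ + a) * (b + ρ)) ^ (-(1/2) : ℝ) * (2 * lam * r) := by
      rw [h1, Real.div_rpow (by positivity) (by positivity),
        Real.mul_rpow hN1.le hN2.le, hsq _ hd, div_eq_mul_inv, inv_inv]
    have hQle : ((ρ + a) * (b + ρ)) ^ (-(1/2) : ℝ) ≤ a⁻¹ := by
      have h1 : (a ^ 2 : ℝ) ≤ (ρ + a) * (b + ρ) := by nlinarith
      have := Real.rpow_le_rpow_of_nonpos (by positivity) h1 (by norm_num : (-(1/2):ℝ) ≤ 0)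
      rwa [hsq a ha] at this
    have hρs : ρ ^ (-1 + s) ≤ a ^ (-1 + s) :=
      Real.rpow_le_rpow_of_nonpos ha hρa.le (by linarith)
    have p1 : 0 ≤ ((ρ - a) * (b - ρ)) ^ (-(1/2) : ℝ) := Real.rpow_nonneg hN1.le _
    have p2 : 0 ≤ ρ ^ (-1 + s) := Real.rpow_nonneg hρ.le _
    have p3 : 0 ≤ ((ρ + a) * (b + ρ)) ^ (-(1/2) : ℝ) := Real.rpow_nonneg hN2.le _
    have p4 : 0 ≤ a ^ (-1 + s) := Real.rpow_nonneg ha.le _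
    have step : ρ ^ (-1 + s) * ((ρ + a) * (b + ρ)) ^ (-(1/2) : ℝ) ≤ a ^ (-1 + s) * a⁻¹ :=
      mul_le_mul hρs hQle p3 p4
    calc ρ ^ (-1 + s) * hKernel ρ lam r ^ (-(1 / 2) : ℝ)
        = (2 * lam * r * ((ρ - a) * (b - ρ)) ^ (-(1/2) : ℝ))
            * (ρ ^ (-1 + s) * ((ρ + a) * (b + ρ)) ^ (-(1/2) : ℝ)) := by rw [hpow]; ring
      _ ≤ (2 * lam * r * ((ρ - a) * (b - ρ)) ^ (-(1/2) : ℝ)) * (a ^ (-1 + s) * a⁻¹) :=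
          mul_le_mul_of_nonneg_left step (by positivity)
      _ = K * (((ρ - a) * (b - ρ)) ^ (-(1/2) : ℝ)) := by rw [hK_def]; ring
  calc ∫⁻ ρ in Ioo a b, ENNReal.ofReal (ρ ^ (-1 + s) * hKernel ρ lam r ^ (-(1 / 2) : ℝ))
      ≤ ∫⁻ ρ in Ioo a b, ENNReal.ofReal (K * (((ρ - a) * (b - ρ)) ^ (-(1/2) : ℝ))) :=
        setLIntegral_mono' measurableSet_Ioo fun ρ hρ => ENNReal.ofReal_le_ofReal (key ρ hρ)
    _ = ENNReal.ofReal K * ∫⁻ ρ in Ioo a b, ENNReal.ofReal ((((ρ - a) * (b - ρ)) ^ (-(1/2) : ℝ))) := by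
        simp_rw [ENNReal.ofReal_mul hK]
        rw [lintegral_const_mul' _ _ ENNReal.ofReal_ne_top]
    _ ≤ ENNReal.ofReal K * 8 := mul_le_mul_right (lint_g a b hab) _
    _ = ENNReal.ofReal (16 * lam * r * (a ^ (-1 + s) * a⁻¹)) := by
        rw [show (8 : ℝ≥0∞) = ENNReal.ofReal 8 by norm_num, ← ENNReal.ofReal_mul hK]
        congr 1
        rw [hK_def]; ring

lemma outer_pointwise (q s r lam d W : ℝ) (hs1 : s < 1) (hr : 0 < r) (hlam : 0 < lam)
    (hd : 0 < d) (hW : 0 ≤ W)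
    (hkey : r ^ (1/q) * lam * d⁻¹ ≤ 2 * lam ^ (1/q)) :
    r ^ (1/q) * (1/r) * (W * (16 * lam * r * (d ^ (-1 + s) * d⁻¹)))
      ≤ 32 * (lam ^ (1/q) * W / d ^ (1 - s)) := by
  have hE : (0:ℝ) ≤ d ^ (-1 + s) := Real.rpow_nonneg hd.le _
  have hRHS : lam ^ (1/q) * W / d ^ (1 - s) = lam ^ (1/q) * W * d ^ (-1 + s) := by
    rw [div_eq_mul_inv, ← Real.rpow_neg hd.le]
    congr 1
    ring
  rw [hRHS]
  have hL : r ^ (1/q) * (1/r) * (W * (16 * lam * r * (d ^ (-1 + s) * d⁻¹)))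
      = (r ^ (1/q) * lam * d⁻¹) * (16 * (W * d ^ (-1 + s))) := by
    field_simp
  rw [hL]
  calc (r ^ (1/q) * lam * d⁻¹) * (16 * (W * d ^ (-1 + s)))
      ≤ (2 * lam ^ (1/q)) * (16 * (W * d ^ (-1 + s))) :=
        mul_le_mul_of_nonneg_right hkey (by positivity)
    _ = 32 * (lam ^ (1/q) * W * d ^ (-1 + s)) := by ring

/-- **Proposition 2.4.** For `1 < q < ∞` and `0 < s < 1` there is a constant `C` such
that for every non-negative measurable `w` on `(0,∞)` and all `r > 0`,
`r^{1/q} Jᵢ(r) ≤ C ∫₀^∞ λ^{1/q} w(λ) |r-λ|^{-(1-s)} dλ` for `i = 1, 3`. -/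
theorem J1_J3_bound (q s : ℝ) (hq : 1 < q) (hs0 : 0 < s) (hs1 : s < 1) :
    ∃ C : ℝ≥0, ∀ w : ℝ → ℝ, (∀ r, 0 ≤ w r) → Measurable w →
      ∀ r : ℝ, 0 < r →
        (ENNReal.ofReal (r ^ (1 / q)) * J₁ s w r
          ≤ C * ∫⁻ lam in Ioi (0 : ℝ),
              ENNReal.ofReal (lam ^ (1 / q) * w lam / |r - lam| ^ (1 - s))) ∧
        (ENNReal.ofReal (r ^ (1 / q)) * J₃ s w r
          ≤ C * ∫⁻ lam in Ioi (0 : ℝ),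
              ENNReal.ofReal (lam ^ (1 / q) * w lam / |r - lam| ^ (1 - s))) := by
  refine ⟨32, fun w hw hwm r hr => ?_⟩
  have hq0 : 0 < q := by linarith
  have hqinv : (0:ℝ) ≤ 1 - 1/q := by
    have : 1/q ≤ 1 := by rw [div_le_one hq0]; linarith
    linarith
  have hC : ((32:ℝ≥0) : ℝ≥0∞) = (32:ℝ≥0∞) := by norm_num
  have hrq : (0:ℝ) ≤ r ^ (1/q) * (1/r) :=
    mul_nonneg (Real.rpow_nonneg hr.le _) (one_div_nonneg.mpr hr.le)
  constructor
  · -- J₁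
    rw [J₁, hC, ← mul_assoc, ← ENNReal.ofReal_mul (Real.rpow_nonneg hr.le _),
      ← lintegral_const_mul' _ _ ENNReal.ofReal_ne_top]
    calc ∫⁻ lam in Ioo (0:ℝ) (r/2), ENNReal.ofReal (r ^ (1/q) * (1/r)) *
            (ENNReal.ofReal (w lam) *
              ∫⁻ ρ in Ioo (r - lam) (r + lam),
                ENNReal.ofReal (ρ ^ (-1 + s) * hKernel ρ lam r ^ (-(1 / 2) : ℝ)))
        ≤ ∫⁻ lam in Ioo (0:ℝ) (r/2),
            32 * ENNReal.ofReal (lam ^ (1/q) * w lam / |r - lam| ^ (1 - s)) := by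
          apply setLIntegral_mono' measurableSet_Ioo
          intro lam hlam'
          obtain ⟨h0, h2⟩ := hlam'
          have hdpos : (0:ℝ) < r - lam := by linarith
          have hib := inner_bound s lam r hs1 h0 hr (by intro h; rw [h] at h2; linarith)
          rw [abs_of_pos hdpos] at hib
          have habs : |r - lam| = r - lam := abs_of_pos hdpos
          have hkey : r ^ (1/q) * lam * (r - lam)⁻¹ ≤ 2 * lam ^ (1/q) := by
            have e1 : lam ^ ((1:ℝ)/q) * lam ^ (1 - 1/q) = lam := by
              rw [← Real.rpow_add h0]; norm_num
            have e2 : r ^ ((1:ℝ)/q) * r ^ (1 - 1/q) = r := by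
              rw [← Real.rpow_add hr]; norm_num
            have h1 : lam ^ ((1:ℝ) - 1/q) ≤ r ^ ((1:ℝ) - 1/q) :=
              Real.rpow_le_rpow h0.le (by linarith) hqinv
            have hA : r ^ ((1:ℝ)/q) * lam ≤ lam ^ ((1:ℝ)/q) * r := by
              calc r ^ ((1:ℝ)/q) * lam
                  = (r ^ ((1:ℝ)/q) * lam ^ ((1:ℝ)/q)) * lam ^ (1 - 1/q) := by
                    rw [mul_assoc, e1]
                _ ≤ (r ^ ((1:ℝ)/q) * lam ^ ((1:ℝ)/q)) * r ^ (1 - 1/q) :=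
                    mul_le_mul_of_nonneg_left h1 (by positivity)
                _ = lam ^ ((1:ℝ)/q) * r := by linear_combination lam ^ ((1:ℝ)/q) * e2
            have hinv : (r - lam)⁻¹ ≤ (r/2)⁻¹ := by
              apply inv_anti₀ (by linarith) (by linarith)
            calc r ^ (1/q) * lam * (r - lam)⁻¹
                ≤ (lam ^ (1/q) * r) * (r - lam)⁻¹ :=
                  mul_le_mul_of_nonneg_right hA (by positivity)
              _ ≤ (lam ^ (1/q) * r) * (r/2)⁻¹ :=
                  mul_le_mul_of_nonneg_left hinv (by positivity)
              _ = 2 * lam ^ (1/q) := by field_simp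
          calc ENNReal.ofReal (r ^ (1/q) * (1/r)) *
                (ENNReal.ofReal (w lam) *
                  ∫⁻ ρ in Ioo (r - lam) (r + lam),
                    ENNReal.ofReal (ρ ^ (-1 + s) * hKernel ρ lam r ^ (-(1 / 2) : ℝ)))
              ≤ ENNReal.ofReal (r ^ (1/q) * (1/r)) *
                  (ENNReal.ofReal (w lam) *
                    ENNReal.ofReal (16 * lam * r * ((r - lam) ^ (-1 + s) * (r - lam)⁻¹))) :=
                mul_le_mul_right (mul_le_mul_right hib _) _
            _ = ENNReal.ofReal (r ^ (1/q) * (1/r) *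
                  (w lam * (16 * lam * r * ((r - lam) ^ (-1 + s) * (r - lam)⁻¹)))) := by
                rw [← ENNReal.ofReal_mul (hw lam), ← ENNReal.ofReal_mul hrq]
            _ ≤ ENNReal.ofReal (32 * (lam ^ (1/q) * w lam / |r - lam| ^ (1 - s))) := by
                apply ENNReal.ofReal_le_ofReal
                rw [habs]
                exact outer_pointwise q s r lam (r - lam) (w lam) hs1 hr h0 hdpos (hw lam) hkey
            _ = 32 * ENNReal.ofReal (lam ^ (1/q) * w lam / |r - lam| ^ (1 - s)) := by
                rw [ENNReal.ofReal_mul (by norm_num : (0:ℝ) ≤ 32)]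
                norm_num
      _ = 32 * ∫⁻ lam in Ioo (0:ℝ) (r/2),
            ENNReal.ofReal (lam ^ (1/q) * w lam / |r - lam| ^ (1 - s)) :=
          lintegral_const_mul' _ _ (by simp)
      _ ≤ 32 * ∫⁻ lam in Ioi (0:ℝ),
            ENNReal.ofReal (lam ^ (1/q) * w lam / |r - lam| ^ (1 - s)) :=
          mul_le_mul_right (lintegral_mono_set Ioo_subset_Ioi_self) _
  · -- J₃
    rw [J₃, hC, ← mul_assoc, ← ENNReal.ofReal_mul (Real.rpow_nonneg hr.le _),
      ← lintegral_const_mul' _ _ ENNReal.ofReal_ne_top]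
    calc ∫⁻ lam in Ioi (2*r), ENNReal.ofReal (r ^ (1/q) * (1/r)) *
            (ENNReal.ofReal (w lam) *
              ∫⁻ ρ in Ioo (lam - r) (lam + r),
                ENNReal.ofReal (ρ ^ (-1 + s) * hKernel ρ lam r ^ (-(1 / 2) : ℝ)))
        ≤ ∫⁻ lam in Ioi (2*r),
            32 * ENNReal.ofReal (lam ^ (1/q) * w lam / |r - lam| ^ (1 - s)) := by
          apply setLIntegral_mono' measurableSet_Ioi
          intro lam hlam'
          have h2 : 2*r < lam := hlam'
          have h0 : 0 < lam := by linarith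
          have hdpos : (0:ℝ) < lam - r := by linarith
          have hib := inner_bound s lam r hs1 h0 hr (by intro h; rw [h] at h2; linarith)
          rw [abs_of_neg (by linarith : r - lam < 0), neg_sub, add_comm r lam] at hib
          have habs : |r - lam| = lam - r := by
            rw [abs_of_neg (by linarith : r - lam < 0), neg_sub]
          have hkey : r ^ (1/q) * lam * (lam - r)⁻¹ ≤ 2 * lam ^ (1/q) := by
            have hA : r ^ ((1:ℝ)/q) ≤ lam ^ ((1:ℝ)/q) :=
              Real.rpow_le_rpow hr.le (by linarith) (by positivity)
            have hB : lam * (lam - r)⁻¹ ≤ 2 := by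
              rw [← div_eq_mul_inv, div_le_iff₀ hdpos]; linarith
            calc r ^ (1/q) * lam * (lam - r)⁻¹
                = r ^ (1/q) * (lam * (lam - r)⁻¹) := by ring
              _ ≤ lam ^ (1/q) * 2 := by
                  apply mul_le_mul hA hB (by positivity) (by positivity)
              _ = 2 * lam ^ (1/q) := by ring
          calc ENNReal.ofReal (r ^ (1/q) * (1/r)) *
                (ENNReal.ofReal (w lam) *
                  ∫⁻ ρ in Ioo (lam - r) (lam + r),
                    ENNReal.ofReal (ρ ^ (-1 + s) * hKernel ρ lam r ^ (-(1 / 2) : ℝ)))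
              ≤ ENNReal.ofReal (r ^ (1/q) * (1/r)) *
                  (ENNReal.ofReal (w lam) *
                    ENNReal.ofReal (16 * lam * r * ((lam - r) ^ (-1 + s) * (lam - r)⁻¹))) :=
                mul_le_mul_right (mul_le_mul_right hib _) _
            _ = ENNReal.ofReal (r ^ (1/q) * (1/r) *
                  (w lam * (16 * lam * r * ((lam - r) ^ (-1 + s) * (lam - r)⁻¹)))) := by
                rw [← ENNReal.ofReal_mul (hw lam), ← ENNReal.ofReal_mul hrq]
            _ ≤ ENNReal.ofReal (32 * (lam ^ (1/q) * w lam / |r - lam| ^ (1 - s))) := by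
                apply ENNReal.ofReal_le_ofReal
                rw [habs]
                exact outer_pointwise q s r lam (lam - r) (w lam) hs1 hr h0 hdpos (hw lam) hkey
            _ = 32 * ENNReal.ofReal (lam ^ (1/q) * w lam / |r - lam| ^ (1 - s)) := by
                rw [ENNReal.ofReal_mul (by norm_num : (0:ℝ) ≤ 32)]
                norm_num
      _ = 32 * ∫⁻ lam in Ioi (2*r),
            ENNReal.ofReal (lam ^ (1/q) * w lam / |r - lam| ^ (1 - s)) :=
          lintegral_const_mul' _ _ (by simp)
      _ ≤ 32 * ∫⁻ lam in Ioi (0:ℝ),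
            ENNReal.ofReal (lam ^ (1/q) * w lam / |r - lam| ^ (1 - s)) :=
          mul_le_mul_right (lintegral_mono_set (Ioi_subset_Ioi (by positivity))) _
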